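/- Assume each ℓ(ξ, ·) is convex, λ-strongly convex on Ω (λ ≥ 0), L-Lipschitz on Ω, differentiable, and β-smooth, so that φ is differentiable, λ-strongly convex on Ω, β-smooth, with ∇φ(w) = ∫ ∇_w ℓ(ξ, w) dμ(ξ) and ‖∇_w ℓ(ξ, w)‖, ‖∇φ(w)‖ ≤ L on Ω. Fix w_prev ∈ Ω and γ > β. Let I = (ξ_1, …, ξ_b) ∼ μ^⊗b and let w₊ be the unique minimizer over Ω of w ↦ ⟨∇φ_I(w_prev), w⟩ + (γ/2)‖w − w_prev‖² (one minibatch SGD step). Then E_I[φ(w₊) − φ(w*)] ≤ 2L²/((γ − β)b) + ((γ − λ)/2)‖w* − w_prev‖² − (γ/2)·E_I‖w* − w₊‖². -/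

import Mathlib

open MeasureTheory
open scoped RealInnerProductSpace

lemma pi_map_eval' {Ξ : Type*} [MeasurableSpace Ξ] (μ : Measure Ξ) [IsProbabilityMeasure μ]
    {b : ℕ} (j : Fin b) :
    (Measure.pi fun _ : Fin b => μ).map (Function.eval j) = μ := by
  ext s hs
  rw [Measure.map_apply (measurable_pi_apply j) hs, Set.eval_preimage, Measure.pi_pi]
  have h1 : ∀ i : Fin b,
      μ (Function.update (fun _ => Set.univ) j s i) = if i = j then μ s else 1 := by
    intro i
    rcases eq_or_ne i j with h | h
    · subst h; simp
    · simp [Function.update_of_ne h, h]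
  rw [Finset.prod_congr rfl fun i _ => h1 i, Finset.prod_ite_eq' Finset.univ j fun _ => μ s]
  simp

lemma pi_map_pair' {Ξ : Type*} [MeasurableSpace Ξ] (μ : Measure Ξ) [IsProbabilityMeasure μ]
    {b : ℕ} {j k : Fin b} (hjk : j ≠ k) :
    (Measure.pi fun _ : Fin b => μ).map (fun I => (I j, I k)) = μ.prod μ := by
  refine (Measure.prod_eq fun s t hs ht => ?_).symm
  have hT : Measurable fun I : Fin b → Ξ => (I j, I k) :=
    (measurable_pi_apply j).prodMk (measurable_pi_apply k)
  rw [Measure.map_apply hT (hs.prod ht)]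
  have hpre : (fun I : Fin b → Ξ => (I j, I k)) ⁻¹' (s ×ˢ t) =
      Set.pi Set.univ (fun i => if i = j then s else if i = k then t else Set.univ) := by
    ext I
    simp only [Set.mem_preimage, Set.mem_prod, Set.mem_pi, Set.mem_univ, forall_true_left]
    constructor
    · rintro ⟨h1, h2⟩ i
      split_ifs with h h'
      · subst h; exact h1
      · subst h'; exact h2
      · trivial
    · intro h
      refine ⟨by simpa using h j, ?_⟩
      have := h k
      simpa [Ne.symm hjk] using this
  rw [hpre, Measure.pi_pi]
  have hfact : ∀ i : Fin b,
      μ (if i = j then s else if i = k then t else Set.univ) =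
        (if i = j then μ s else 1) * (if i = k then μ t else 1) := by
    intro i
    rcases eq_or_ne i j with h | h
    · subst h; simp [hjk]
    · rcases eq_or_ne i k with h' | h'
      · subst h'; simp [h]
      · simp [h, h']
  rw [Finset.prod_congr rfl fun i _ => hfact i, Finset.prod_mul_distrib,
    Finset.prod_ite_eq' Finset.univ j fun _ => μ s,
    Finset.prod_ite_eq' Finset.univ k fun _ => μ t]
  simp


lemma pointwise_step' {E : Type*} [NormedAddCommGroup E] [InnerProductSpace ℝ E]
    {Ω : Set E} (hconv : Convex ℝ Ω)
    {φ : E → ℝ} {gφ : E → E} {lam β γ : ℝ}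
    {wstar wprev wp : E} (hwstar : wstar ∈ Ω) (hwprev : wprev ∈ Ω) (hwp : wp ∈ Ω)
    (hγ : β < γ)
    (hsc : φ wstar - φ wprev ≥ ⟪gφ wprev, wstar - wprev⟫ + lam / 2 * ‖wstar - wprev‖ ^ 2)
    (hsm : φ wp ≤ φ wprev + ⟪gφ wprev, wp - wprev⟫ + β / 2 * ‖wp - wprev‖ ^ 2)
    {g : E} (hmin : ∀ u ∈ Ω, ⟪g, wp⟫ + γ / 2 * ‖wp - wprev‖ ^ 2 ≤ ⟪g, u⟫ + γ / 2 * ‖u - wprev‖ ^ 2) :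
    φ wp - φ wstar ≤ (γ - lam) / 2 * ‖wstar - wprev‖ ^ 2 - γ / 2 * ‖wstar - wp‖ ^ 2
      + 1 / (2 * (γ - β)) * ‖gφ wprev - g‖ ^ 2 + ⟪gφ wprev - g, wprev - wstar⟫ := by
  have hgφ : gφ wprev = g + (gφ wprev - g) := by abel
  set Δ := gφ wprev - g with hΔ
  set v := wstar - wp with hv
  set d := wp - wprev with hd
  -- variational inequality
  have key : ∀ t : ℝ, 0 < t → t ≤ 1 →
      0 ≤ (⟪g, v⟫ + γ * ⟪d, v⟫) + γ * t / 2 * ‖v‖ ^ 2 := by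
    intro t ht ht1
    have hu : (1 - t) • wp + t • wstar ∈ Ω := hconv hwp hwstar (by linarith) ht.le (by ring)
    have hue : (1 - t) • wp + t • wstar = wp + t • v := by
      rw [hv]; module
    rw [hue] at hu
    have h2 := hmin _ hu
    have hexp : wp + t • v - wprev = d + t • v := by rw [hd]; abel
    rw [hexp, inner_add_right, real_inner_smul_right] at h2
    have hn : ‖d + t • v‖ ^ 2 = ‖d‖ ^ 2 + 2 * (t * ⟪d, v⟫) + t ^ 2 * ‖v‖ ^ 2 := by
      rw [norm_add_sq_real, real_inner_smul_right, norm_smul, Real.norm_eq_abs,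
        abs_of_pos ht, mul_pow]
    rw [hn] at h2
    by_contra hc
    push_neg at hc
    have h3 : 0 ≤ t * ((⟪g, v⟫ + γ * ⟪d, v⟫) + γ * t / 2 * ‖v‖ ^ 2) := by nlinarith
    have h4 : t * ((⟪g, v⟫ + γ * ⟪d, v⟫) + γ * t / 2 * ‖v‖ ^ 2) < 0 :=
      mul_neg_of_pos_of_neg ht hc
    linarith
  have hA : 0 ≤ ⟪g, v⟫ + γ * ⟪d, v⟫ := by
    rcases le_or_gt (γ * ‖v‖ ^ 2) 0 with hB | hB
    · have := key 1 one_pos le_rfl; nlinarith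
    · by_contra hc
      push_neg at hc
      set A := ⟪g, v⟫ + γ * ⟪d, v⟫ with hAdef
      set t := min 1 (-A / (γ * ‖v‖ ^ 2)) with htdef
      have ht0 : 0 < t := lt_min one_pos (div_pos (neg_pos.mpr hc) hB)
      have h5 := key t ht0 (min_le_left _ _)
      have h6 : t ≤ -A / (γ * ‖v‖ ^ 2) := min_le_right _ _
      have h7 : t * (γ * ‖v‖ ^ 2) ≤ -A := (le_div_iff₀ hB).mp h6
      nlinarith
  have h8 : wstar - wprev = d + v := by rw [hd, hv]; abel
  have hid : ‖d + v‖ ^ 2 = ‖d‖ ^ 2 + 2 * ⟪d, v⟫ + ‖v‖ ^ 2 := norm_add_sq_real d v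
  have hsm' : φ wp ≤ φ wprev + (⟪g, d⟫ + ⟪Δ, d⟫) + β / 2 * ‖d‖ ^ 2 := by
    rw [hgφ, inner_add_left] at hsm; exact hsm
  rw [hgφ, h8, inner_add_left, inner_add_right, inner_add_right] at hsc
  have hyoung : ⟪Δ, d⟫ ≤ 1 / (2 * (γ - β)) * ‖Δ‖ ^ 2 + (γ - β) / 2 * ‖d‖ ^ 2 := by
    have h9 : 0 < γ - β := by linarith
    have h10 : ⟪Δ, d⟫ ≤ ‖Δ‖ * ‖d‖ := real_inner_le_norm Δ d
    have h11 : ‖Δ‖ * ‖d‖ ≤ (‖Δ‖ ^ 2 + (γ - β) ^ 2 * ‖d‖ ^ 2) / (2 * (γ - β)) := by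
      rw [le_div_iff₀ (by linarith)]
      nlinarith [sq_nonneg (‖Δ‖ - (γ - β) * ‖d‖)]
    have h12 : (‖Δ‖ ^ 2 + (γ - β) ^ 2 * ‖d‖ ^ 2) / (2 * (γ - β)) =
        1 / (2 * (γ - β)) * ‖Δ‖ ^ 2 + (γ - β) / 2 * ‖d‖ ^ 2 := by
      field_simp
    linarith
  have ha4 : ⟪Δ, wprev - wstar⟫ = -(⟪Δ, d⟫ + ⟪Δ, v⟫) := by
    rw [← inner_add_right, ← inner_neg_right]
    congr 1
    rw [hd, hv]; abel
  have hlamid : (γ - lam) / 2 * ‖d + v‖ ^ 2 + lam / 2 * ‖d + v‖ ^ 2 =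
      γ / 2 * ‖d‖ ^ 2 + γ * ⟪d, v⟫ + γ / 2 * ‖v‖ ^ 2 := by rw [hid]; ring
  rw [ha4, h8]
  linarith

/-- One minibatch SGD step: with each `ℓ(ξ,·)` convex, `λ`-strongly convex,
`L`-Lipschitz, differentiable and `β`-smooth, `γ > β`, and `w₊` the minimizer over `Ω` of
`w ↦ ⟨∇φ_I(w_prev), w⟩ + (γ/2)‖w - w_prev‖²` for a minibatch `I ∼ μ^⊗b`,
`E_I[φ(w₊) - φ(w*)] ≤ 2L²/((γ-β)b) + ((γ-λ)/2)‖w* - w_prev‖² - (γ/2)E_I‖w* - w₊‖²`. -/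
theorem stmt_15 {E : Type*} [NormedAddCommGroup E] [InnerProductSpace ℝ E] [CompleteSpace E]
    {Ω : Set E} (hne : Ω.Nonempty) (hcl : IsClosed Ω) (hconv : Convex ℝ Ω)
    {Ξ : Type*} [MeasurableSpace Ξ] (μ : Measure Ξ) [IsProbabilityMeasure μ]
    (l : Ξ → E → ℝ) {lam L β : ℝ} (hlam : 0 ≤ lam) (hL : 0 < L)
    (hconvl : ∀ ξ, ConvexOn ℝ Ω (l ξ))
    (hscl : ∀ ξ, StrongConvexOn Ω lam (l ξ))
    (hlip : ∀ ξ, ∀ u ∈ Ω, ∀ u' ∈ Ω, |l ξ u - l ξ u'| ≤ L * ‖u - u'‖)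
    (gl : Ξ → E → E)
    (hgl : ∀ ξ u, HasGradientAt (l ξ) (gl ξ u) u)
    (hglb : ∀ ξ, ∀ u ∈ Ω, ‖gl ξ u‖ ≤ L)
    (hsmoothl : ∀ ξ, ∀ u ∈ Ω, ∀ v ∈ Ω,
      l ξ u ≤ l ξ v + ⟪gl ξ v, u - v⟫ + β / 2 * ‖u - v‖ ^ 2)
    (φ : E → ℝ) (hφ : ∀ u, φ u = ∫ ξ, l ξ u ∂μ)
    (hφint : ∀ u ∈ Ω, Integrable (fun ξ => l ξ u) μ)
    (gφ : E → E) (hgφ : ∀ u, HasGradientAt φ (gφ u) u)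
    (hgφeq : ∀ u ∈ Ω, gφ u = ∫ ξ, gl ξ u ∂μ)
    (hgφb : ∀ u ∈ Ω, ‖gφ u‖ ≤ L)
    (hscφ : ∀ u ∈ Ω, ∀ v ∈ Ω, φ u - φ v ≥ ⟪gφ v, u - v⟫ + lam / 2 * ‖u - v‖ ^ 2)
    (hsmoothφ : ∀ u ∈ Ω, ∀ v ∈ Ω, φ u ≤ φ v + ⟪gφ v, u - v⟫ + β / 2 * ‖u - v‖ ^ 2)
    {wstar : E} (hwstar : wstar ∈ Ω) (hwstarmin : IsMinOn φ Ω wstar)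
    {wprev : E} (hwprev : wprev ∈ Ω) {γ : ℝ} (hγ : β < γ)
    {b : ℕ} (hb : 1 ≤ b)
    (P : Measure (Fin b → Ξ)) (hP : P = Measure.pi fun _ : Fin b => μ)
    (wplus : (Fin b → Ξ) → E) (hmem : ∀ I, wplus I ∈ Ω)
    (hmin : ∀ I, IsMinOn
      (fun u => ⟪(1 / (b : ℝ)) • ∑ j, gl (I j) wprev, u⟫ + γ / 2 * ‖u - wprev‖ ^ 2)
      Ω (wplus I))
    (hmeas : AEStronglyMeasurable wplus P)
    (hglmeas : AEStronglyMeasurable (fun ξ => gl ξ wprev) μ)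
    (hint1 : Integrable (fun I => φ (wplus I)) P)
    (hint2 : Integrable (fun I => ‖wstar - wplus I‖ ^ 2) P) :
    ∫ I, (φ (wplus I) - φ wstar) ∂P ≤
      2 * L ^ 2 / ((γ - β) * b) + (γ - lam) / 2 * ‖wstar - wprev‖ ^ 2 -
        γ / 2 * ∫ I, ‖wstar - wplus I‖ ^ 2 ∂P := by
  subst hP
  set P := (Measure.pi fun _ : Fin b => μ) with hPdef
  have hb0 : (0:ℝ) < b := by exact_mod_cast hb
  have hγβ : (0:ℝ) < γ - β := by linarith
  set G := gφ wprev with hG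
  set Y : Ξ → E := fun ξ => gl ξ wprev - G with hY
  have hYm : AEStronglyMeasurable Y μ := hglmeas.sub aestronglyMeasurable_const
  have hYb : ∀ ξ, ‖Y ξ‖ ≤ 2 * L := fun ξ => by
    have h1 := hglb ξ wprev hwprev
    have h2 := hgφb wprev hwprev
    calc ‖Y ξ‖ ≤ ‖gl ξ wprev‖ + ‖G‖ := norm_sub_le _ _
    _ ≤ 2 * L := by rw [hG]; linarith
  have hYint : Integrable Y μ :=
    Integrable.mono' (integrable_const (2*L)) hYm (Filter.Eventually.of_forall hYb)
  have hY0 : ∫ ξ, Y ξ ∂μ = 0 := by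
    have hglint : Integrable (fun ξ => gl ξ wprev) μ :=
      Integrable.mono' (integrable_const L) hglmeas
        (Filter.Eventually.of_forall fun ξ => hglb ξ wprev hwprev)
    rw [hY]
    rw [integral_sub hglint (integrable_const G), integral_const, ← hgφeq wprev hwprev, ← hG]
    simp
  have hev : ∀ j : Fin b, Measurable (fun I : Fin b → Ξ => I j) :=
    fun j => measurable_pi_apply j
  have hmapev : ∀ j : Fin b, P.map (fun I => I j) = μ := fun j => pi_map_eval' μ j
  have hYjm : ∀ j, AEStronglyMeasurable (fun I : Fin b → Ξ => Y (I j)) P := fun j => by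
    have h1 := hYm
    rw [← hmapev j] at h1
    exact h1.comp_aemeasurable (hev j).aemeasurable
  have hintYY : ∀ j k : Fin b, Integrable (fun I => ⟪Y (I j), Y (I k)⟫) P := fun j k =>
    Integrable.mono' (integrable_const (4*L^2)) ((hYjm j).inner (hYjm k))
      (Filter.Eventually.of_forall fun I => by
        rw [Real.norm_eq_abs]
        calc |⟪Y (I j), Y (I k)⟫| ≤ ‖Y (I j)‖ * ‖Y (I k)‖ := abs_real_inner_le_norm _ _
        _ ≤ (2*L)*(2*L) := mul_le_mul (hYb _) (hYb _) (norm_nonneg _) (by linarith)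
        _ = 4*L^2 := by ring)
  have E3 : ∀ j k : Fin b, j ≠ k → ∫ I, ⟪Y (I j), Y (I k)⟫ ∂P = 0 := by
    intro j k hjk
    have hT : Measurable fun I : Fin b → Ξ => (I j, I k) := (hev j).prodMk (hev k)
    have hmapT : P.map (fun I => (I j, I k)) = μ.prod μ := pi_map_pair' μ hjk
    have hgm : AEStronglyMeasurable (fun p : Ξ × Ξ => ⟪Y p.1, Y p.2⟫) (μ.prod μ) :=
      hYm.comp_fst.inner hYm.comp_snd
    have step1 : ∫ I, ⟪Y (I j), Y (I k)⟫ ∂P = ∫ p : Ξ × Ξ, ⟪Y p.1, Y p.2⟫ ∂(μ.prod μ) := by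
      rw [← hmapT, integral_map hT.aemeasurable (by rwa [hmapT])]
    rw [step1]
    have hintp : Integrable (fun p : Ξ × Ξ => ⟪Y p.1, Y p.2⟫) (μ.prod μ) :=
      Integrable.mono' (integrable_const (4*L^2)) hgm
        (Filter.Eventually.of_forall fun p => by
          rw [Real.norm_eq_abs]
          calc |⟪Y p.1, Y p.2⟫| ≤ ‖Y p.1‖ * ‖Y p.2‖ := abs_real_inner_le_norm _ _
          _ ≤ (2*L)*(2*L) := mul_le_mul (hYb _) (hYb _) (norm_nonneg _) (by linarith)
          _ = 4*L^2 := by ring)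
    rw [MeasureTheory.integral_prod _ hintp]
    have h2 : ∀ a, ∫ b', ⟪Y a, Y b'⟫ ∂μ = 0 := fun a => by
      rw [integral_inner hYint, hY0, inner_zero_right]
    simp [h2]
  have E2 : ∀ j : Fin b, ∫ I, ⟪Y (I j), Y (I j)⟫ ∂P ≤ 4*L^2 := fun j => by
    calc ∫ I, ⟪Y (I j), Y (I j)⟫ ∂P ≤ ∫ _I, 4*L^2 ∂P :=
      integral_mono (hintYY j j) (integrable_const _) (fun I => by
        rw [real_inner_self_eq_norm_sq]
        nlinarith [hYb (I j), norm_nonneg (Y (I j))])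
    _ = 4*L^2 := by simp
  have E1 : ∀ (j : Fin b) (c : E), ∫ I, ⟪Y (I j), c⟫ ∂P = 0 := by
    intro j c
    have step1 : ∫ I, ⟪Y (I j), c⟫ ∂P = ∫ ξ, ⟪Y ξ, c⟫ ∂μ := by
      rw [← hmapev j, integral_map (hev j).aemeasurable
        (by rw [hmapev j]; exact hYm.inner aestronglyMeasurable_const)]
    rw [step1]
    have h2 : ∀ ξ, ⟪Y ξ, c⟫ = ⟪c, Y ξ⟫ := fun ξ => real_inner_comm _ _
    simp_rw [h2]
    rw [integral_inner hYint, hY0, inner_zero_right]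
  have hintYc : ∀ (j : Fin b) (c : E), Integrable (fun I => ⟪Y (I j), c⟫) P := fun j c =>
    Integrable.mono' (integrable_const (2*L*‖c‖)) ((hYjm j).inner aestronglyMeasurable_const)
      (Filter.Eventually.of_forall fun I => by
        rw [Real.norm_eq_abs]
        calc |⟪Y (I j), c⟫| ≤ ‖Y (I j)‖*‖c‖ := abs_real_inner_le_norm _ _
        _ ≤ 2*L*‖c‖ := mul_le_mul_of_nonneg_right (hYb _) (norm_nonneg _))
  set S : (Fin b → Ξ) → E := fun I => ∑ j, Y (I j) with hS
  have hSsq : ∀ I, ‖S I‖^2 = ∑ j, ∑ k, ⟪Y (I j), Y (I k)⟫ := fun I => by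
    rw [← real_inner_self_eq_norm_sq]
    show ⟪∑ j, Y (I j), ∑ k, Y (I k)⟫ = _
    rw [sum_inner]
    exact Finset.sum_congr rfl fun j _ => inner_sum _ _ _
  have hintSsq : Integrable (fun I => ‖S I‖^2) P := by
    have heq : (fun I => ‖S I‖^2) = fun I => ∑ j, ∑ k, ⟪Y (I j), Y (I k)⟫ := funext hSsq
    rw [heq]
    exact integrable_finset_sum _ fun j _ => integrable_finset_sum _ fun k _ => hintYY j k
  have ESsq : ∫ I, ‖S I‖^2 ∂P ≤ (b:ℝ) * (4*L^2) := by
    have h1 : ∫ I, ‖S I‖^2 ∂P = ∑ j, ∑ k, ∫ I, ⟪Y (I j), Y (I k)⟫ ∂P := by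
      simp_rw [hSsq]
      rw [integral_finset_sum _ fun j _ => integrable_finset_sum _ fun k _ => hintYY j k]
      exact Finset.sum_congr rfl fun j _ => integral_finset_sum _ fun k _ => hintYY j k
    rw [h1]
    have h2 : ∀ j : Fin b, ∑ k, ∫ I, ⟪Y (I j), Y (I k)⟫ ∂P = ∫ I, ⟪Y (I j), Y (I j)⟫ ∂P :=
      fun j => Finset.sum_eq_single j (fun k _ hkj => E3 j k fun h => hkj h.symm) (by simp)
    rw [Finset.sum_congr rfl fun j _ => h2 j]
    calc ∑ j : Fin b, ∫ I, ⟪Y (I j), Y (I j)⟫ ∂P ≤ ∑ _j : Fin b, 4*L^2 :=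
      Finset.sum_le_sum fun j _ => E2 j
    _ = (b:ℝ)*(4*L^2) := by simp [Finset.sum_const, mul_comm]
  set Δ : (Fin b → Ξ) → E := fun I => G - (1 / (b:ℝ)) • ∑ j, gl (I j) wprev with hΔ
  have hΔS : ∀ I, Δ I = -((1/(b:ℝ)) • S I) := fun I => by
    show G - (1 / (b:ℝ)) • ∑ j, gl (I j) wprev = -((1/(b:ℝ)) • ∑ j, Y (I j))
    have h1 : ∑ j : Fin b, Y (I j) = (∑ j, gl (I j) wprev) - (b:ℝ) • G := by
      show ∑ j : Fin b, (gl (I j) wprev - G) = _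
      rw [Finset.sum_sub_distrib, Finset.sum_const, Finset.card_univ, Fintype.card_fin,
        ← Nat.cast_smul_eq_nsmul ℝ]
    rw [h1, smul_sub, smul_smul, one_div, inv_mul_cancel₀ (ne_of_gt hb0), one_smul]
    abel
  have hΔsq : ∀ I, ‖Δ I‖^2 = (1/(b:ℝ))^2 * ‖S I‖^2 := fun I => by
    rw [hΔS I, norm_neg, norm_smul, Real.norm_eq_abs, abs_of_pos (by positivity), mul_pow]
  have hintΔsq : Integrable (fun I => ‖Δ I‖^2) P := by
    have heq : (fun I => ‖Δ I‖^2) = fun I => (1/(b:ℝ))^2 * ‖S I‖^2 := funext hΔsq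
    rw [heq]
    exact hintSsq.const_mul _
  have EΔsq : ∫ I, ‖Δ I‖^2 ∂P ≤ 4*L^2 / b := by
    have heq : (fun I => ‖Δ I‖^2) = fun I => (1/(b:ℝ))^2 * ‖S I‖^2 := funext hΔsq
    rw [heq, integral_const_mul]
    calc (1/(b:ℝ))^2 * ∫ I, ‖S I‖^2 ∂P ≤ (1/(b:ℝ))^2 * ((b:ℝ)*(4*L^2)) :=
      mul_le_mul_of_nonneg_left ESsq (by positivity)
    _ = 4*L^2/b := by field_simp
  have hΔc : ∀ I, ⟪Δ I, wprev - wstar⟫ = -((1/(b:ℝ)) * ∑ j, ⟪Y (I j), wprev - wstar⟫) :=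
    fun I => by
      rw [hΔS I, inner_neg_left, real_inner_smul_left, sum_inner]
  have hintΔc : Integrable (fun I => ⟪Δ I, wprev - wstar⟫) P := by
    have heq : (fun I => ⟪Δ I, wprev - wstar⟫) =
        fun I => -((1/(b:ℝ)) * ∑ j, ⟪Y (I j), wprev - wstar⟫) := funext hΔc
    rw [heq]
    exact ((integrable_finset_sum _ fun j _ => hintYc j _).const_mul _).neg
  have EΔc : ∫ I, ⟪Δ I, wprev - wstar⟫ ∂P = 0 := by
    have heq : (fun I => ⟪Δ I, wprev - wstar⟫) =
        fun I => -((1/(b:ℝ)) * ∑ j, ⟪Y (I j), wprev - wstar⟫) := funext hΔc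
    rw [heq, integral_neg, integral_const_mul,
      integral_finset_sum _ fun j _ => hintYc j _]
    simp [E1]
  have hpt : ∀ I, φ (wplus I) - φ wstar ≤
      (γ - lam) / 2 * ‖wstar - wprev‖ ^ 2 - γ / 2 * ‖wstar - wplus I‖ ^ 2
      + 1 / (2 * (γ - β)) * ‖Δ I‖ ^ 2 + ⟪Δ I, wprev - wstar⟫ := by
    intro I
    have h := pointwise_step' hconv hwstar hwprev (hmem I) hγ
      (hscφ wstar hwstar wprev hwprev) (hsmoothφ (wplus I) (hmem I) wprev hwprev)
      (g := (1 / (b:ℝ)) • ∑ j, gl (I j) wprev)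
      (fun u hu => isMinOn_iff.mp (hmin I) u hu)
    exact h
  have hLint : Integrable (fun I => φ (wplus I) - φ wstar) P := hint1.sub (integrable_const _)
  have hRint : Integrable (fun I =>
      (γ - lam) / 2 * ‖wstar - wprev‖ ^ 2 - γ / 2 * ‖wstar - wplus I‖ ^ 2
      + 1 / (2 * (γ - β)) * ‖Δ I‖ ^ 2 + ⟪Δ I, wprev - wstar⟫) P :=
    (((integrable_const _).sub (hint2.const_mul _)).add (hintΔsq.const_mul _)).add hintΔc
  have hmono := integral_mono hLint hRint hpt
  have hRval : ∫ I, ((γ - lam) / 2 * ‖wstar - wprev‖ ^ 2 - γ / 2 * ‖wstar - wplus I‖ ^ 2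
      + 1 / (2 * (γ - β)) * ‖Δ I‖ ^ 2 + ⟪Δ I, wprev - wstar⟫) ∂P =
      (γ - lam) / 2 * ‖wstar - wprev‖ ^ 2 - γ / 2 * (∫ I, ‖wstar - wplus I‖ ^ 2 ∂P)
      + 1 / (2 * (γ - β)) * (∫ I, ‖Δ I‖ ^ 2 ∂P) := by
    have i1 : Integrable (fun I =>
        (γ - lam) / 2 * ‖wstar - wprev‖ ^ 2 - γ / 2 * ‖wstar - wplus I‖ ^ 2) P :=
      (integrable_const _).sub (hint2.const_mul _)
    have i2 : Integrable (fun I =>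
        (γ - lam) / 2 * ‖wstar - wprev‖ ^ 2 - γ / 2 * ‖wstar - wplus I‖ ^ 2
        + 1 / (2 * (γ - β)) * ‖Δ I‖ ^ 2) P := i1.add (hintΔsq.const_mul _)
    rw [integral_add i2 hintΔc, integral_add i1 (hintΔsq.const_mul _),
      integral_sub (integrable_const _) (hint2.const_mul _),
      integral_const_mul, integral_const_mul, integral_const, EΔc]
    simp
    rw [integral_const_mul]
  have hfinal : 1/(2*(γ-β)) * (∫ I, ‖Δ I‖^2 ∂P) ≤ 2*L^2/((γ-β)*(b:ℝ)) := by
    calc 1/(2*(γ-β)) * (∫ I, ‖Δ I‖^2 ∂P) ≤ 1/(2*(γ-β)) * (4*L^2/b) :=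
      mul_le_mul_of_nonneg_left EΔsq (by positivity)
    _ = 2*L^2/((γ-β)*(b:ℝ)) := by field_simp; ring
  rw [hRval] at hmono
  linarith
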